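/- arXiv:2311.03400 — 3 statements merged into one kernel-verified Lean document; each statement's English description precedes it below -/
import Mathlib

section
/- Let G = (V, E, γ) be a labeled directed graph and M = (V', E', γ') a motif that is connected and has at least 3 vertices. If W₁ and W₂ are non-overlapping sets of embeddings of M in G with W₁ ≠ W₂, then φ(W₁) ≠ φ(W₂); that is, the edge-decomposition map φ is injective on non-overlapping embedding sets of M in G. -/
/-- The vertex set (set of endpoints) of an edge set `Λ` in a directed graph. -/
def endpts {V : Type*} (Λ : Set (V × V)) : Set V :=
  {v | ∃ e ∈ Λ, e.1 = v ∨ e.2 = v}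

/-- The edge-induced subgraph `G[Λ]` (edges `Λ`, labels `γ`) is isomorphic to the
motif `M = (V', E', γ')`. -/
def IsoToMotif {V V' : Type*} (γ : V × V → Bool) (Λ : Set (V × V))
    (E' : Set (V' × V')) (γ' : V' × V' → Bool) : Prop :=
  ∃ g : ↥(endpts Λ) ≃ V',
    (∀ u v : ↥(endpts Λ), ((u : V), (v : V)) ∈ Λ ↔ (g u, g v) ∈ E') ∧
    (∀ u v : ↥(endpts Λ), ((u : V), (v : V)) ∈ Λ → γ ((u : V), (v : V)) = γ' (g u, g v))

/-- `Λ` is an embedding of the motif `M = (V', E', γ')` in the graph `G = (V, E, γ)`. -/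
def IsEmbedding {V V' : Type*} (E : Set (V × V)) (γ : V × V → Bool)
    (E' : Set (V' × V')) (γ' : V' × V' → Bool) (Λ : Set (V × V)) : Prop :=
  Λ ⊆ E ∧ IsoToMotif γ Λ E' γ'

/-- `W` is a non-overlapping set of embeddings of `M` in `G`. -/
def NonOverlappingSet {V V' : Type*} (E : Set (V × V)) (γ : V × V → Bool)
    (E' : Set (V' × V')) (γ' : V' × V' → Bool) (W : Set (Set (V × V))) : Prop :=
  (∀ Λ ∈ W, IsEmbedding E γ E' γ' Λ) ∧
  W.Pairwise fun Λ₁ Λ₂ => Disjoint (endpts Λ₁) (endpts Λ₂)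

/-- The edge decomposition `φ(W) = ⋃_{Λ ∈ W} Λ`. -/
def edgeDecomp {V : Type*} (W : Set (Set (V × V))) : Set (V × V) := ⋃₀ W

/-- The motif (as a labeled directed graph on the whole vertex type `V'`) is connected,
i.e. the undirected graph obtained by forgetting directions and labels is connected. -/
def MotifConnected {V' : Type*} (E' : Set (V' × V')) : Prop :=
  (SimpleGraph.fromRel fun a b => (a, b) ∈ E' ∨ (b, a) ∈ E').Connected

-- aux
lemma motif_edge_nonempty {V' : Type*} [Fintype V'] {E' : Set (V' × V')}
    (hconn : MotifConnected E') (hcard : 2 ≤ Fintype.card V') : E'.Nonempty := by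
  obtain ⟨a, b, hab⟩ := Fintype.exists_pair_of_one_lt_card (α := V') (by omega)
  obtain ⟨w⟩ := hconn.preconnected a b
  cases w with
  | nil => exact absurd rfl hab
  | cons h p =>
    rw [SimpleGraph.fromRel_adj] at h
    rcases h.2 with (h' | h') | (h' | h') <;> exact ⟨_, h'⟩

lemma lam_nonempty {V V' : Type*} {γ : V × V → Bool} {Λ : Set (V × V)}
    {E' : Set (V' × V')} {γ' : V' × V' → Bool}
    (hiso : IsoToMotif γ Λ E' γ') (hE' : E'.Nonempty) : Λ.Nonempty := by
  obtain ⟨g, hg1, -⟩ := hiso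
  obtain ⟨⟨a, b⟩, hab⟩ := hE'
  exact ⟨(↑(g.symm a), ↑(g.symm b)), by rw [hg1]; simpa using hab⟩

lemma subset_member {V V' : Type*} {E : Set (V × V)} {γ : V × V → Bool}
    {E' : Set (V' × V')} {γ' : V' × V' → Bool}
    (hconn : MotifConnected E') {Λ : Set (V × V)}
    (hiso : IsoToMotif γ Λ E' γ') {W : Set (Set (V × V))}
    (hW : NonOverlappingSet E γ E' γ' W) (hsub : Λ ⊆ ⋃₀ W)
    (hΛne : Λ.Nonempty) : ∃ m ∈ W, Λ ⊆ m := by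
  classical
  obtain ⟨g, hg1, -⟩ := hiso
  set H : SimpleGraph ↥(endpts Λ) :=
    SimpleGraph.fromRel (fun a b => ((a : V), (b : V)) ∈ Λ ∨ ((b : V), (a : V)) ∈ Λ) with hH
  have hmr : ∀ u v : V', H.Adj (g.symm u) (g.symm v) ↔
      (SimpleGraph.fromRel fun a b : V' => (a, b) ∈ E' ∨ (b, a) ∈ E').Adj u v := by
    intro u v
    have e1 := hg1 (g.symm u) (g.symm v)
    have e2 := hg1 (g.symm v) (g.symm u)
    simp only [Equiv.apply_symm_apply] at e1 e2
    simp only [hH, SimpleGraph.fromRel_adj, ne_eq, e1, e2, EmbeddingLike.apply_eq_iff_eq]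
  have hpre : H.Preconnected := by
    intro a b
    have h := (hconn.preconnected (g a) (g b)).map
      (SimpleGraph.Iso.toHom ⟨g.symm, fun {u v} => hmr u v⟩)
    simpa using h
  -- uniqueness of member containing a given vertex
  have huniq : ∀ m₁ ∈ W, ∀ m₂ ∈ W, ∀ v : V, v ∈ endpts m₁ → v ∈ endpts m₂ → m₁ = m₂ := by
    intro m₁ h1 m₂ h2 v hv1 hv2
    by_contra h
    exact Set.disjoint_left.mp (hW.2 h1 h2 h) hv1 hv2
  obtain ⟨e₀, he₀⟩ := hΛne
  obtain ⟨m₀, hm₀W, he₀m₀⟩ := hsub he₀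
  have hx : e₀.1 ∈ endpts Λ := ⟨e₀, he₀, Or.inl rfl⟩
  have hxm₀ : e₀.1 ∈ endpts m₀ := ⟨e₀, he₀m₀, Or.inl rfl⟩
  -- one step
  have step : ∀ u v : ↥(endpts Λ),
      (((u : V), (v : V)) ∈ Λ ∨ ((v : V), (u : V)) ∈ Λ) →
      (u : V) ∈ endpts m₀ → (v : V) ∈ endpts m₀ := by
    rintro u v (he | he) hu
    · obtain ⟨m, hmW, hem⟩ := hsub he
      have := huniq m hmW m₀ hm₀W u ⟨_, hem, Or.inl rfl⟩ hu
      subst this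
      exact ⟨_, hem, Or.inr rfl⟩
    · obtain ⟨m, hmW, hem⟩ := hsub he
      have := huniq m hmW m₀ hm₀W u ⟨_, hem, Or.inr rfl⟩ hu
      subst this
      exact ⟨_, hem, Or.inl rfl⟩
  have key : ∀ (a b : ↥(endpts Λ)) (_ : H.Walk a b),
      (a : V) ∈ endpts m₀ → (b : V) ∈ endpts m₀ := by
    intro a b w
    induction w with
    | nil => exact id
    | cons h p ih =>
      intro ha
      apply ih
      rw [hH, SimpleGraph.fromRel_adj] at h
      refine step _ _ ?_ ha
      tauto
  have hall : ∀ v ∈ endpts Λ, v ∈ endpts m₀ := by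
    intro v hv
    exact key ⟨e₀.1, hx⟩ ⟨v, hv⟩ (hpre ⟨e₀.1, hx⟩ ⟨v, hv⟩).some hxm₀
  refine ⟨m₀, hm₀W, ?_⟩
  intro e he
  obtain ⟨m, hmW, hem⟩ := hsub he
  have h1 : e.1 ∈ endpts m := ⟨e, hem, Or.inl rfl⟩
  have h2 : e.1 ∈ endpts m₀ := hall e.1 ⟨e, he, Or.inl rfl⟩
  rw [huniq m hmW m₀ hm₀W e.1 h1 h2] at hem
  exact hem

lemma subset_of_decomp {V V' : Type*} {E : Set (V × V)} {γ : V × V → Bool}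
    {E' : Set (V' × V')} {γ' : V' × V' → Bool}
    (hconn : MotifConnected E') (hE' : E'.Nonempty)
    {W W' : Set (Set (V × V))}
    (hW : NonOverlappingSet E γ E' γ' W) (hW' : NonOverlappingSet E γ E' γ' W')
    (h : edgeDecomp W = edgeDecomp W') : W ⊆ W' := by
  intro Λ hΛ
  have hiso := (hW.1 Λ hΛ).2
  have hΛne : Λ.Nonempty := lam_nonempty hiso hE'
  have hsub : Λ ⊆ ⋃₀ W' := by
    rw [show (⋃₀ W' : Set (V × V)) = edgeDecomp W' from rfl, ← h]
    exact Set.subset_sUnion_of_mem hΛ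
  obtain ⟨m, hmW', hΛm⟩ := subset_member hconn hiso hW' hsub hΛne
  have hisom := (hW'.1 m hmW').2
  have hmsub : m ⊆ ⋃₀ W := by
    rw [show (⋃₀ W : Set (V × V)) = edgeDecomp W from rfl, h]
    exact Set.subset_sUnion_of_mem hmW'
  obtain ⟨Λ'', hΛ''W, hmΛ''⟩ := subset_member hconn hisom hW hmsub (hΛne.mono hΛm)
  have hΛΛ'' : Λ = Λ'' := by
    by_contra hne'
    obtain ⟨e, he⟩ := hΛne
    exact Set.disjoint_left.mp (hW.2 hΛ hΛ''W hne') ⟨e, he, Or.inl rfl⟩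
      ⟨e, hmΛ'' (hΛm he), Or.inl rfl⟩
  have : m = Λ := Set.Subset.antisymm (hΛΛ'' ▸ hmΛ'') hΛm
  rwa [← this]

theorem stmt0 {V V' : Type*} [Fintype V] [Fintype V']
    (E : Set (V × V)) (γ : V × V → Bool)
    (E' : Set (V' × V')) (γ' : V' × V' → Bool)
    (hconn : MotifConnected E') (hcard : 3 ≤ Fintype.card V')
    (W₁ W₂ : Set (Set (V × V)))
    (h₁ : NonOverlappingSet E γ E' γ' W₁) (h₂ : NonOverlappingSet E γ E' γ' W₂)
    (hne : W₁ ≠ W₂) :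
    edgeDecomp W₁ ≠ edgeDecomp W₂ := by
  intro h
  have hE' : E'.Nonempty := motif_edge_nonempty hconn (by omega)
  exact hne (Set.Subset.antisymm (subset_of_decomp hconn hE' h₁ h₂ h)
    (subset_of_decomp hconn hE' h₂ h₁ h.symm))
end

section
/- Let G = (V, E, γ) be a labeled directed graph and M = (V', E', γ') a motif that is connected and has at least 3 vertices. If an edge set 𝓔 ⊆ E satisfies Property 1 (with uniqueness) and Property 2, then there exists exactly one non-overlapping set W of embeddings of M in G with φ(W) = 𝓔. -/
/-- Property 1 (with uniqueness): every edge of `𝓔` lies in exactly one edge set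
`Λ ⊆ 𝓔` whose induced subgraph is isomorphic to the motif. -/
def Property1 {V V' : Type*} (γ : V × V → Bool) (E' : Set (V' × V'))
    (γ' : V' × V' → Bool) (𝓔 : Set (V × V)) : Prop :=
  ∀ e ∈ 𝓔, ∃! Λ : Set (V × V), e ∈ Λ ∧ Λ ⊆ 𝓔 ∧ IsoToMotif γ Λ E' γ'

/-- Property 2: any two edges of `𝓔` sharing a vertex lie in a common edge set
`Λ ⊆ 𝓔` whose induced subgraph is isomorphic to the motif. -/
def Property2 {V V' : Type*} (γ : V × V → Bool) (E' : Set (V' × V'))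
    (γ' : V' × V' → Bool) (𝓔 : Set (V × V)) : Prop :=
  ∀ e₁ ∈ 𝓔, ∀ e₂ ∈ 𝓔, (({e₁.1, e₁.2} : Set V) ∩ {e₂.1, e₂.2}).Nonempty →
    ∃ Λ : Set (V × V), Λ ⊆ 𝓔 ∧ e₁ ∈ Λ ∧ e₂ ∈ Λ ∧ IsoToMotif γ Λ E' γ'

theorem stmt2 {V V' : Type*} [Fintype V] [Fintype V']
    (E : Set (V × V)) (γ : V × V → Bool)
    (E' : Set (V' × V')) (γ' : V' × V' → Bool)
    (hconn : MotifConnected E') (hcard : 3 ≤ Fintype.card V')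
    (𝓔 : Set (V × V)) (h𝓔 : 𝓔 ⊆ E)
    (h1 : Property1 γ E' γ' 𝓔) (h2 : Property2 γ E' γ' 𝓔) :
    ∃! W : Set (Set (V × V)), NonOverlappingSet E γ E' γ' W ∧ edgeDecomp W = 𝓔 := by
  have hV' : Nonempty V' := Fintype.card_pos_iff.mp (by omega)
  have hne : ∀ Λ : Set (V × V), IsoToMotif γ Λ E' γ' → Λ.Nonempty := by
    rintro Λ ⟨g, -, -⟩
    obtain ⟨v'⟩ := hV'
    obtain ⟨e, he, -⟩ := (g.symm v').2
    exact ⟨e, he⟩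
  set W : Set (Set (V × V)) := {Λ | Λ ⊆ 𝓔 ∧ IsoToMotif γ Λ E' γ'} with hWdef
  have hdec : edgeDecomp W = 𝓔 := by
    ext e
    constructor
    · rintro ⟨Λ, hΛ, heΛ⟩
      exact hΛ.1 heΛ
    · intro he
      obtain ⟨Λ, ⟨heΛ, hsub, hiso⟩, -⟩ := h1 e he
      exact ⟨Λ, ⟨hsub, hiso⟩, heΛ⟩
  refine ⟨W, ⟨⟨?_, ?_⟩, hdec⟩, ?_⟩
  · rintro Λ ⟨hsub, hiso⟩
    exact ⟨hsub.trans h𝓔, hiso⟩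
  · rintro Λ₁ h₁ Λ₂ h₂ hne12
    rw [Set.disjoint_left]
    rintro v ⟨e₁, he₁, hv₁⟩ ⟨e₂, he₂, hv₂⟩
    have he₁𝓔 : e₁ ∈ 𝓔 := h₁.1 he₁
    have he₂𝓔 : e₂ ∈ 𝓔 := h₂.1 he₂
    have hshare : (({e₁.1, e₁.2} : Set V) ∩ {e₂.1, e₂.2}).Nonempty := by
      refine ⟨v, ?_, ?_⟩
      · cases hv₁ <;> simp_all
      · cases hv₂ <;> simp_all
    obtain ⟨Λ, hΛ𝓔, he₁Λ, he₂Λ, hΛiso⟩ := h2 e₁ he₁𝓔 e₂ he₂𝓔 hshare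
    obtain ⟨Λu₁, -, hu₁⟩ := h1 e₁ he₁𝓔
    obtain ⟨Λu₂, -, hu₂⟩ := h1 e₂ he₂𝓔
    have h1eq : Λ₁ = Λ := (hu₁ Λ₁ ⟨he₁, h₁.1, h₁.2⟩).trans (hu₁ Λ ⟨he₁Λ, hΛ𝓔, hΛiso⟩).symm
    have h2eq : Λ₂ = Λ := (hu₂ Λ₂ ⟨he₂, h₂.1, h₂.2⟩).trans (hu₂ Λ ⟨he₂Λ, hΛ𝓔, hΛiso⟩).symm
    exact hne12 (h1eq.trans h2eq.symm)
  · rintro W' ⟨⟨hEmb, hPw⟩, hdec'⟩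
    ext Λ
    constructor
    · intro hΛ'
      have hsub : Λ ⊆ 𝓔 := hdec' ▸ Set.subset_sUnion_of_mem hΛ'
      exact ⟨hsub, (hEmb Λ hΛ').2⟩
    · rintro ⟨hsub, hiso⟩
      obtain ⟨e, heΛ⟩ := hne Λ hiso
      have he𝓔 : e ∈ 𝓔 := hsub heΛ
      have : e ∈ edgeDecomp W' := hdec'.symm ▸ he𝓔
      obtain ⟨Λ', hΛ'W, heΛ'⟩ := this
      have hsub' : Λ' ⊆ 𝓔 := hdec' ▸ Set.subset_sUnion_of_mem hΛ'W
      obtain ⟨Λu, -, hu⟩ := h1 e he𝓔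
      have : Λ = Λ' :=
        (hu Λ ⟨heΛ, hsub, hiso⟩).trans (hu Λ' ⟨heΛ', hsub', (hEmb Λ' hΛ'W).2⟩).symm
      exact this ▸ hΛ'W
end

section
/- Let G = (V, E, γ) be a labeled directed graph and M = (V', E', γ') a motif that is connected and has at least 3 vertices. The map W ↦ φ(W) is a bijection from the collection of non-overlapping sets of embeddings of M in G onto the collection of edge sets 𝓔 ⊆ E satisfying Property 1 (with uniqueness) and Property 2, and under this bijection |φ(W)| = |W| · |E'|. Consequently, the maximum cardinality of a non-overlapping embedding set of M in G equals (1/|E'|) times the maximum cardinality of an edge set 𝓔 ⊆ E satisfying Property 1 (with uniqueness) and Property 2. -/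
lemma mem_endpts_fst {V : Type*} {Λ : Set (V × V)} {e : V × V} (he : e ∈ Λ) : e.1 ∈ endpts Λ :=
  ⟨e, he, Or.inl rfl⟩

lemma mem_endpts_snd {V : Type*} {Λ : Set (V × V)} {e : V × V} (he : e ∈ Λ) : e.2 ∈ endpts Λ :=
  ⟨e, he, Or.inr rfl⟩

lemma iso_ncard {V V' : Type*} {γ : V × V → Bool} {Λ : Set (V × V)} {E' : Set (V' × V')}
    {γ' : V' × V' → Bool} (hV' : Nonempty V') (h : IsoToMotif γ Λ E' γ') :
    Λ.ncard = E'.ncard := by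
  classical
  obtain ⟨g, hg, -⟩ := h
  let F : V × V → V' × V' := fun e =>
    if h : e.1 ∈ endpts Λ ∧ e.2 ∈ endpts Λ then (g ⟨e.1, h.1⟩, g ⟨e.2, h.2⟩)
    else (Classical.choice hV', Classical.choice hV')
  have hFval : ∀ e (h : e.1 ∈ endpts Λ ∧ e.2 ∈ endpts Λ),
      F e = (g ⟨e.1, h.1⟩, g ⟨e.2, h.2⟩) := fun e h => dif_pos h
  have hbij : Set.BijOn F Λ E' := by
    refine ⟨?_, ?_, ?_⟩
    · intro e he
      have h1 : e.1 ∈ endpts Λ ∧ e.2 ∈ endpts Λ := ⟨mem_endpts_fst he, mem_endpts_snd he⟩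
      rw [hFval e h1]
      exact (hg ⟨e.1, h1.1⟩ ⟨e.2, h1.2⟩).mp (by simpa using he)
    · intro e he e' he' heq
      have h1 : e.1 ∈ endpts Λ ∧ e.2 ∈ endpts Λ := ⟨mem_endpts_fst he, mem_endpts_snd he⟩
      have h2 : e'.1 ∈ endpts Λ ∧ e'.2 ∈ endpts Λ := ⟨mem_endpts_fst he', mem_endpts_snd he'⟩
      rw [hFval e h1, hFval e' h2, Prod.mk.injEq] at heq
      have ha : e.1 = e'.1 := congrArg Subtype.val (g.injective heq.1)
      have hb : e.2 = e'.2 := congrArg Subtype.val (g.injective heq.2)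
      exact Prod.ext ha hb
    · rintro ⟨x, y⟩ hxy
      refine ⟨((g.symm x : V), (g.symm y : V)), (hg _ _).mpr (by simpa using hxy), ?_⟩
      have h1 : ((g.symm x : V), (g.symm y : V)).1 ∈ endpts Λ ∧
          ((g.symm x : V), (g.symm y : V)).2 ∈ endpts Λ := ⟨(g.symm x).2, (g.symm y).2⟩
      rw [hFval _ h1]
      simp
  rw [← hbij.image_eq, Set.ncard_image_of_injOn hbij.injOn]

lemma memberEq {V V' : Type*} {E : Set (V × V)} {γ : V × V → Bool} {E' : Set (V' × V')}
    {γ' : V' × V' → Bool} {W : Set (Set (V × V))}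
    (hW : NonOverlappingSet E γ E' γ' W) {Λ₁ Λ₂ : Set (V × V)} (h1 : Λ₁ ∈ W) (h2 : Λ₂ ∈ W)
    {v : V} (hv1 : v ∈ endpts Λ₁) (hv2 : v ∈ endpts Λ₂) : Λ₁ = Λ₂ := by
  by_contra hne
  exact Set.disjoint_left.mp (hW.2 h1 h2 hne) hv1 hv2

lemma walk_prop {α : Type*} {G : SimpleGraph α} {Q : α → Prop}
    (hstep : ∀ x y, G.Adj x y → Q x → Q y) :
    ∀ {x y : α}, G.Walk x y → Q x → Q y := by
  intro x y w
  induction w with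
  | nil => exact id
  | cons h p ih => exact fun hx => ih (hstep _ _ h hx)

lemma E'_nonempty {V' : Type*} [Fintype V'] {E' : Set (V' × V')} (hconn : MotifConnected E')
    (hcard : 3 ≤ Fintype.card V') : E'.Nonempty := by
  obtain ⟨a, b, hab⟩ := Fintype.exists_pair_of_one_lt_card (α := V') (by omega)
  obtain ⟨w⟩ := hconn.preconnected a b
  cases w with
  | nil => exact absurd rfl hab
  | cons h p =>
    rw [SimpleGraph.fromRel_adj] at h
    rcases h.2 with (h | h) | (h | h)
    exacts [⟨_, h⟩, ⟨_, h⟩, ⟨_, h⟩, ⟨_, h⟩]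

lemma lambda_nonempty {V V' : Type*} {γ : V × V → Bool} {Λ : Set (V × V)} {E' : Set (V' × V')}
    {γ' : V' × V' → Bool} (hE' : E'.Nonempty) (h : IsoToMotif γ Λ E' γ') : Λ.Nonempty := by
  obtain ⟨g, hg, -⟩ := h
  obtain ⟨e', he'⟩ := hE'
  exact ⟨((g.symm e'.1 : V), (g.symm e'.2 : V)), (hg _ _).mpr (by simpa using he')⟩

lemma ncard_sUnion' {α : Type*} [Finite α] {k : ℕ} (W : Set (Set α)) :
    W.Pairwise (Disjoint · ·) → (∀ s ∈ W, s.ncard = k) → (⋃₀ W).ncard = W.ncard * k := by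
  refine Set.Finite.induction_on
    (motive := fun W _ => W.Pairwise (Disjoint · ·) → (∀ s ∈ W, s.ncard = k) →
      (⋃₀ W).ncard = W.ncard * k) W (Set.toFinite W) (by simp) ?_
  intro a s ha _ ih hdis hcard
  have hd : Disjoint a (⋃₀ s) := by
    rw [Set.disjoint_sUnion_right]
    intro t ht
    exact hdis (Set.mem_insert _ _) (Set.mem_insert_of_mem _ ht) (by rintro rfl; exact ha ht)
  rw [Set.sUnion_insert, Set.ncard_union_eq hd (Set.toFinite _) (Set.toFinite _),
    Set.ncard_insert_of_notMem ha (Set.toFinite _),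
    ih (hdis.mono (Set.subset_insert _ _)) (fun t ht => hcard t (Set.mem_insert_of_mem _ ht)),
    hcard a (Set.mem_insert _ _)]
  ring

lemma mem_of_iso {V V' : Type*} [Fintype V] [Fintype V'] {E : Set (V × V)} {γ : V × V → Bool}
    {E' : Set (V' × V')} {γ' : V' × V' → Bool}
    (hconn : MotifConnected E') (hcard : 3 ≤ Fintype.card V')
    {W : Set (Set (V × V))} (hW : NonOverlappingSet E γ E' γ' W)
    {Λ' : Set (V × V)} (hsub : Λ' ⊆ ⋃₀ W) (hiso : IsoToMotif γ Λ' E' γ') :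
    Λ' ∈ W := by
  have hV' : Nonempty V' := Fintype.card_pos_iff.mp (by omega)
  have hE' : E'.Nonempty := E'_nonempty hconn hcard
  have hcΛ' : Λ'.ncard = E'.ncard := iso_ncard hV' hiso
  obtain ⟨e₀, he₀⟩ := lambda_nonempty hE' hiso
  obtain ⟨Λ₀, hΛ₀W, he₀Λ₀⟩ := hsub he₀
  obtain ⟨g, hg, -⟩ := hiso
  set Q : V' → Prop := fun x => ∀ Λ ∈ W, ((g.symm x : V) ∈ endpts Λ) → Λ = Λ₀ with hQ
  have hstep : ∀ x y, (SimpleGraph.fromRel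
      fun a b => (a, b) ∈ E' ∨ (b, a) ∈ E').Adj x y → Q x → Q y := by
    intro x y hadj hx
    rw [SimpleGraph.fromRel_adj] at hadj
    have hedge : ((g.symm x : V), (g.symm y : V)) ∈ Λ' ∨
        ((g.symm y : V), (g.symm x : V)) ∈ Λ' := by
      rcases hadj.2 with (h | h) | (h | h)
      · exact Or.inl ((hg _ _).mpr (by simpa using h))
      · exact Or.inr ((hg _ _).mpr (by simpa using h))
      · exact Or.inr ((hg _ _).mpr (by simpa using h))
      · exact Or.inl ((hg _ _).mpr (by simpa using h))
    obtain he | he := hedge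
    · obtain ⟨Λ₂, hΛ₂W, heΛ₂⟩ := hsub he
      have h20 : Λ₂ = Λ₀ := hx Λ₂ hΛ₂W (mem_endpts_fst heΛ₂)
      intro Λ hΛ hy
      exact (memberEq hW hΛ hΛ₂W hy (mem_endpts_snd heΛ₂)).trans h20
    · obtain ⟨Λ₂, hΛ₂W, heΛ₂⟩ := hsub he
      have h20 : Λ₂ = Λ₀ := hx Λ₂ hΛ₂W (mem_endpts_snd heΛ₂)
      intro Λ hΛ hy
      exact (memberEq hW hΛ hΛ₂W hy (mem_endpts_fst heΛ₂)).trans h20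
  have hx₀ : Q (g ⟨e₀.1, mem_endpts_fst he₀⟩) := by
    intro Λ hΛ hy
    rw [Equiv.symm_apply_apply] at hy
    exact memberEq hW hΛ hΛ₀W hy (mem_endpts_fst he₀Λ₀)
  have hQall : ∀ y, Q y := fun y =>
    (hconn.preconnected _ y).elim fun w => walk_prop hstep w hx₀
  have hsub0 : Λ' ⊆ Λ₀ := by
    intro e he
    obtain ⟨Λ₁, hΛ₁W, heΛ₁⟩ := hsub he
    have h10 : Λ₁ = Λ₀ := by
      have := hQall (g ⟨e.1, mem_endpts_fst he⟩) Λ₁ hΛ₁W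
      rw [Equiv.symm_apply_apply] at this
      exact this (mem_endpts_fst heΛ₁)
    exact h10 ▸ heΛ₁
  have hc0 : Λ₀.ncard = E'.ncard := iso_ncard hV' (hW.1 Λ₀ hΛ₀W).2
  have heq : Λ' = Λ₀ :=
    Set.eq_of_subset_of_ncard_le hsub0 (by rw [hcΛ', hc0]) (Set.toFinite _)
  exact heq ▸ hΛ₀W

theorem stmt7 {V V' : Type*} [Fintype V] [Fintype V']
    (E : Set (V × V)) (γ : V × V → Bool)
    (E' : Set (V' × V')) (γ' : V' × V' → Bool)
    (hconn : MotifConnected E') (hcard : 3 ≤ Fintype.card V') :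
    -- `φ` is a bijection from the non-overlapping embedding sets of `M` in `G`
    -- onto the edge sets `𝓔 ⊆ E` satisfying Property 1 (with uniqueness) and Property 2:
    Set.BijOn edgeDecomp {W | NonOverlappingSet E γ E' γ' W}
      {𝓔 | 𝓔 ⊆ E ∧ Property1 γ E' γ' 𝓔 ∧ Property2 γ E' γ' 𝓔} ∧
    -- under this bijection `|φ(W)| = |W| · |E'|`:
    (∀ W, NonOverlappingSet E γ E' γ' W → (edgeDecomp W).ncard = W.ncard * E'.ncard) ∧
    -- consequently the maximum cardinality of a non-overlapping embedding set equals
    -- `(1/|E'|)` times the maximum cardinality of such an edge set `𝓔`: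
    sSup (Set.ncard '' {W | NonOverlappingSet E γ E' γ' W}) =
      sSup (Set.ncard '' {𝓔 | 𝓔 ⊆ E ∧ Property1 γ E' γ' 𝓔 ∧ Property2 γ E' γ' 𝓔}) /
        E'.ncard := by
  classical
  have hV' : Nonempty V' := Fintype.card_pos_iff.mp (by omega)
  have hE' : E'.Nonempty := E'_nonempty hconn hcard
  have hk : 0 < E'.ncard := (Set.ncard_pos (Set.toFinite _)).mpr hE'
  -- cardinality formula
  have hcardW : ∀ W, NonOverlappingSet E γ E' γ' W →
      (edgeDecomp W).ncard = W.ncard * E'.ncard := by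
    intro W hW
    have hdis : W.Pairwise (Disjoint · ·) := by
      intro Λ₁ h1 Λ₂ h2 hne
      exact Set.disjoint_left.mpr fun e he1 he2 =>
        hne (memberEq hW h1 h2 (mem_endpts_fst he1) (mem_endpts_fst he2))
    exact ncard_sUnion' W hdis (fun Λ hΛ => iso_ncard hV' (hW.1 Λ hΛ).2)
  -- bijectivity
  have hbij : Set.BijOn edgeDecomp {W | NonOverlappingSet E γ E' γ' W}
      {𝓔 | 𝓔 ⊆ E ∧ Property1 γ E' γ' 𝓔 ∧ Property2 γ E' γ' 𝓔} := by
    refine ⟨?_, ?_, ?_⟩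
    · -- MapsTo
      intro W hW
      refine ⟨?_, ?_, ?_⟩
      · rintro e ⟨Λ, hΛ, he⟩
        exact (hW.1 Λ hΛ).1 he
      · rintro e ⟨Λ, hΛ, heΛ⟩
        refine ⟨Λ, ⟨heΛ, Set.subset_sUnion_of_mem hΛ, (hW.1 Λ hΛ).2⟩, ?_⟩
        rintro Λ'' ⟨he'', hsub'', hiso''⟩
        have h2 : Λ'' ∈ W := mem_of_iso hconn hcard hW hsub'' hiso''
        exact memberEq hW h2 hΛ (mem_endpts_fst he'') (mem_endpts_fst heΛ)
      · rintro e₁ ⟨Λ₁, h1, hm1⟩ e₂ ⟨Λ₂, h2, hm2⟩ ⟨v, hv1, hv2⟩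
        have hv1' : v ∈ endpts Λ₁ :=
          ⟨e₁, hm1, hv1.elim (fun h => Or.inl h.symm) (fun h => Or.inr h.symm)⟩
        have hv2' : v ∈ endpts Λ₂ :=
          ⟨e₂, hm2, hv2.elim (fun h => Or.inl h.symm) (fun h => Or.inr h.symm)⟩
        have h12 : Λ₁ = Λ₂ := memberEq hW h1 h2 hv1' hv2'
        exact ⟨Λ₁, Set.subset_sUnion_of_mem h1, hm1, h12 ▸ hm2, (hW.1 Λ₁ h1).2⟩
    · -- InjOn
      intro W₁ h1 W₂ h2 heq
      ext Λ
      constructor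
      · intro hΛ
        have hsub : Λ ⊆ edgeDecomp W₂ :=
          heq ▸ (Set.subset_sUnion_of_mem hΛ : Λ ⊆ edgeDecomp W₁)
        exact mem_of_iso hconn hcard h2 hsub ((h1.1 Λ hΛ).2)
      · intro hΛ
        have hsub : Λ ⊆ edgeDecomp W₁ :=
          heq ▸ (Set.subset_sUnion_of_mem hΛ : Λ ⊆ edgeDecomp W₂)
        exact mem_of_iso hconn hcard h1 hsub ((h2.1 Λ hΛ).2)
    · -- SurjOn
      rintro 𝓔 ⟨hsubE, hP1, hP2⟩
      refine ⟨{Λ | Λ ⊆ 𝓔 ∧ IsoToMotif γ Λ E' γ'}, ?_, ?_⟩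
      · constructor
        · intro Λ hΛ
          exact ⟨hΛ.1.trans hsubE, hΛ.2⟩
        · intro Λ₁ h1 Λ₂ h2 hne
          rw [Set.disjoint_left]
          intro v hv1 hv2
          obtain ⟨e₁, he₁, hv1'⟩ := hv1
          obtain ⟨e₂, he₂, hv2'⟩ := hv2
          obtain ⟨Λ, hΛsub, he₁Λ, he₂Λ, hΛiso⟩ :=
            hP2 e₁ (h1.1 he₁) e₂ (h2.1 he₂)
              ⟨v, hv1'.elim (fun h => h ▸ Set.mem_insert _ _)
                    (fun h => h ▸ Set.mem_insert_of_mem _ rfl),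
                  hv2'.elim (fun h => h ▸ Set.mem_insert _ _)
                    (fun h => h ▸ Set.mem_insert_of_mem _ rfl)⟩
          obtain ⟨Λu, -, huniq⟩ := hP1 e₁ (h1.1 he₁)
          have e1eq : Λ₁ = Λ :=
            (huniq Λ₁ ⟨he₁, h1.1, h1.2⟩).trans (huniq Λ ⟨he₁Λ, hΛsub, hΛiso⟩).symm
          obtain ⟨Λu₂, -, huniq₂⟩ := hP1 e₂ (h2.1 he₂)
          have e2eq : Λ₂ = Λ :=
            (huniq₂ Λ₂ ⟨he₂, h2.1, h2.2⟩).trans (huniq₂ Λ ⟨he₂Λ, hΛsub, hΛiso⟩).symm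
          exact hne (e1eq.trans e2eq.symm)
      · apply Set.Subset.antisymm
        · rintro e ⟨Λ, hΛ, he⟩
          exact hΛ.1 he
        · intro e he
          obtain ⟨Λ, ⟨heΛ, hsub, hiso⟩, -⟩ := hP1 e he
          exact ⟨Λ, ⟨hsub, hiso⟩, heΛ⟩
  refine ⟨hbij, hcardW, ?_⟩
  -- sSup part
  set S := {W | NonOverlappingSet E γ E' γ' W} with hS
  set A := Set.ncard '' S with hA
  have hAne : A.Nonempty :=
    ⟨(∅ : Set (Set (V × V))).ncard, ∅,
      ⟨fun Λ h => absurd h (Set.notMem_empty Λ), Set.pairwise_empty _⟩, rfl⟩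
  have hbound : ∀ a ∈ A, a ≤ (Set.univ : Set (Set (V × V))).ncard := by
    rintro a ⟨W, -, rfl⟩
    exact Set.ncard_le_ncard (Set.subset_univ _) (Set.toFinite _)
  have hAbdd : BddAbove A := ⟨_, hbound⟩
  have hs := Nat.sSup_mem hAne hAbdd
  have himg : Set.ncard '' {𝓔 | 𝓔 ⊆ E ∧ Property1 γ E' γ' 𝓔 ∧ Property2 γ E' γ' 𝓔} =
      (fun n => n * E'.ncard) '' A := by
    rw [← hbij.image_eq, hA, ← Set.image_comp, ← Set.image_comp]
    exact Set.image_congr (fun W hW => hcardW W hW)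
  rw [himg]
  have h1 : sSup ((fun n => n * E'.ncard) '' A) = sSup A * E'.ncard := by
    apply le_antisymm
    · apply csSup_le (hAne.image _)
      rintro b ⟨a, ha, rfl⟩
      exact Nat.mul_le_mul_right _ (le_csSup hAbdd ha)
    · refine le_csSup ⟨sSup A * E'.ncard, ?_⟩ ⟨sSup A, hs, rfl⟩
      rintro b ⟨a, ha, rfl⟩
      exact Nat.mul_le_mul_right _ (le_csSup hAbdd ha)
  rw [h1, Nat.mul_div_cancel _ hk]
end
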